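/- Let CP=(P_0,P_1) be a 2-PDS communicating via a finite set Locks (with disjoint state sets and stack alphabets) and let P_comb be the combined pushdown system. For every reachable configuration (((q_0,held_0),(q_1,held_1)), w) of P_comb, the configuration ((q_0, w restricted to Gamma_0, held_0), (q_1, w restricted to Gamma_1, held_1)) of CP is reachable by a well-bracketed computation of CP, where w restricted to Gamma_i denotes the subword of w consisting of its letters belonging to Gamma_i. -/

import Mathlib

/-- Transition labels of a pushdown system using locks. -/
inductive Label (L : Type) : Type where
  | state : Label L
  | push : Label L
  | pop : Label L
  | acq : L → Label L
  | rel : L → Label L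

/-- A pushdown system (PDS) using the set of locks `L`, with control states `Q`
and stack alphabet `Γ`. -/
structure PDS (Q Γ L : Type) where
  start : Q
  stateTr : Set (Q × Q)
  pushTr : Set (Q × (Q × Γ))
  popTr : Set ((Q × Γ) × Q)
  acqTr : Set (Q × (Q × L))
  relTr : Set ((Q × L) × Q)

/-- A local configuration of one thread: control state, stack and held locks. -/
abbrev LConf (Q Γ L : Type) : Type := Q × List Γ × Set L

/-- One labelled step of a single thread, in an environment where the locks in
`free` are free (held by no thread). -/
def PDS.LStep {Q Γ L : Type} (P : PDS Q Γ L) (free : Set L) (c : LConf Q Γ L) :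
    Label L → LConf Q Γ L → Prop
  | .state, c' => (c.1, c'.1) ∈ P.stateTr ∧ c'.2.1 = c.2.1 ∧ c'.2.2 = c.2.2
  | .push, c' => ∃ a, (c.1, (c'.1, a)) ∈ P.pushTr ∧ c'.2.1 = c.2.1 ++ [a] ∧ c'.2.2 = c.2.2
  | .pop, c' => ∃ a, ((c.1, a), c'.1) ∈ P.popTr ∧ c.2.1 = c'.2.1 ++ [a] ∧ c'.2.2 = c.2.2
  | .acq l, c' => (c.1, (c'.1, l)) ∈ P.acqTr ∧ l ∈ free ∧ c'.2.1 = c.2.1 ∧ c'.2.2 = c.2.2 ∪ {l}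
  | .rel l, c' => ((c.1, l), c'.1) ∈ P.relTr ∧ l ∈ c.2.2 ∧ c'.2.1 = c.2.1 ∧ c'.2.2 = c.2.2 \ {l}

/-- A 2-PDS communicating via locks `L`. -/
structure TwoPDS (Q₀ Γ₀ Q₁ Γ₁ L : Type) where
  P0 : PDS Q₀ Γ₀ L
  P1 : PDS Q₁ Γ₁ L

namespace TwoPDS

variable {Q₀ Γ₀ Q₁ Γ₁ L : Type}

/-- A configuration of a 2-PDS. -/
abbrev Conf (Q₀ Γ₀ Q₁ Γ₁ L : Type) : Type := LConf Q₀ Γ₀ L × LConf Q₁ Γ₁ L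

/-- The locks that are held by no thread. -/
def freeLocks (s : Conf Q₀ Γ₀ Q₁ Γ₁ L) : Set L := {l | l ∉ s.1.2.2 ∧ l ∉ s.2.2.2}

/-- The labelled transition relation of a 2-PDS: in a step labelled `(λ, i)`
only the `i`-th component changes. -/
def Step (CP : TwoPDS Q₀ Γ₀ Q₁ Γ₁ L) (s : Conf Q₀ Γ₀ Q₁ Γ₁ L) (lab : Label L × Fin 2)
    (t : Conf Q₀ Γ₀ Q₁ Γ₁ L) : Prop :=
  (lab.2 = 0 ∧ CP.P0.LStep (freeLocks s) s.1 lab.1 t.1 ∧ t.2 = s.2) ∨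
  (lab.2 = 1 ∧ CP.P1.LStep (freeLocks s) s.2 lab.1 t.2 ∧ t.1 = s.1)

/-- The initial configuration. -/
def initConf (CP : TwoPDS Q₀ Γ₀ Q₁ Γ₁ L) : Conf Q₀ Γ₀ Q₁ Γ₁ L :=
  ((CP.P0.start, [], ∅), (CP.P1.start, [], ∅))

/-- A (finite) computation `s 0 → s 1 → ⋯ → s len` of a 2-PDS, starting from the
initial configuration; the transition from `s k` to `s (k+1)` has label `lab k`. -/
structure Comp (CP : TwoPDS Q₀ Γ₀ Q₁ Γ₁ L) where
  len : ℕ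
  s : ℕ → Conf Q₀ Γ₀ Q₁ Γ₁ L
  lab : ℕ → Label L × Fin 2
  init : s 0 = CP.initConf
  step : ∀ k < len, CP.Step (s k) (lab k) (s (k + 1))

variable {CP : TwoPDS Q₀ Γ₀ Q₁ Γ₁ L}

/-- Height of the stack of thread `i` in the `k`-th configuration. -/
def Comp.height (c : Comp CP) (i : Fin 2) (k : ℕ) : ℕ :=
  if i = 0 then (c.s k).1.2.1.length else (c.s k).2.2.1.length

/-- The set of locks held by thread `i` in the `k`-th configuration. -/
def Comp.lockset (c : Comp CP) (i : Fin 2) (k : ℕ) : Set L :=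
  if i = 0 then (c.s k).1.2.2 else (c.s k).2.2.2

/-- The procedure return of thread `i` at position `j` matches the procedure call of
thread `i` at position `l`. -/
def Comp.Matching (c : Comp CP) (i : Fin 2) (l j : ℕ) : Prop :=
  l < j ∧ j < c.len ∧ c.lab l = (Label.push, i) ∧ c.lab j = (Label.pop, i) ∧
    c.height i l = c.height i (j + 1) ∧
    ∀ p, l + 1 ≤ p → p ≤ j → c.height i (l + 1) ≤ c.height i p

/-- Thread `i` of the 2-PDS follows contextual locking. -/
def Contextual (CP : TwoPDS Q₀ Γ₀ Q₁ Γ₁ L) (i : Fin 2) : Prop :=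
  ∀ c : Comp CP, ∀ l j, c.Matching i l j →
    c.lockset i l = c.lockset i j ∧ ∀ r, l ≤ r → r ≤ j → c.lockset i l ⊆ c.lockset i r

/-- `(l₁, l₂, l₃)` is a witness of non-well-bracketing of the computation `c`. -/
def Comp.Witness (c : Comp CP) (l₁ l₂ l₃ : ℕ) : Prop :=
  ∃ i : Fin 2, l₁ < l₂ ∧ l₂ < l₃ ∧ l₃ < c.len ∧ c.Matching i l₁ l₃ ∧
    c.lab l₂ = (Label.push, 1 - i) ∧ ∀ j, c.Matching (1 - i) l₂ j → l₃ < j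

/-- A computation is well-bracketed if it has no witness of non-well-bracketing. -/
def Comp.WellBracketed (c : Comp CP) : Prop := ∀ l₁ l₂ l₃, ¬ c.Witness l₁ l₂ l₃

/-- `Reach CP p q`: some computation of `CP` ends in a configuration whose control
states are `p` and `q`. -/
def Reach (CP : TwoPDS Q₀ Γ₀ Q₁ Γ₁ L) (p : Q₀) (q : Q₁) : Prop :=
  ∃ c : Comp CP, (c.s c.len).1.1 = p ∧ (c.s c.len).2.1 = q

end TwoPDS

/-- One step of a single pushdown system viewed as a plain (lock-free) transition
system on pairs (control state, stack); used for the combined PDS, whose lock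
alphabet is `Empty` so it has no acquire/release transitions. -/
def PDS.CStep {Q Γ L : Type} (P : PDS Q Γ L) (c c' : Q × List Γ) : Prop :=
  ((c.1, c'.1) ∈ P.stateTr ∧ c'.2 = c.2) ∨
  (∃ a, (c.1, (c'.1, a)) ∈ P.pushTr ∧ c'.2 = c.2 ++ [a]) ∨
  (∃ a, ((c.1, a), c'.1) ∈ P.popTr ∧ c.2 = c'.2 ++ [a])

/-- A configuration of a single PDS is reachable if some computation starting from
the initial control state with empty stack ends in it. -/
def PDS.Reachable {Q Γ L : Type} (P : PDS Q Γ L) (c : Q × List Γ) : Prop :=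
  Relation.ReflTransGen P.CStep (P.start, []) c

namespace TwoPDS

/-- Control states of the combined pushdown system. -/
abbrev CombState (Q₀ Q₁ L : Type) : Type := (Q₀ × Set L) × (Q₁ × Set L)

variable {Q₀ Γ₀ Q₁ Γ₁ L : Type}

/-- The combined pushdown system `P_comb` of a 2-PDS: a single PDS (using no locks)
whose control states are `(Q₀ × 2^L) × (Q₁ × 2^L)` and whose stack alphabet is the
disjoint union `Γ₀ ⊕ Γ₁`. Internal actions, lock acquisitions and lock releases of
the two threads become internal actions; calls and returns push/pop tagged symbols. -/
def comb (CP : TwoPDS Q₀ Γ₀ Q₁ Γ₁ L) : PDS (CombState Q₀ Q₁ L) (Γ₀ ⊕ Γ₁) Empty where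
  start := ((CP.P0.start, ∅), (CP.P1.start, ∅))
  stateTr := { x | match x with
    | (((q₀, h₀), (q₁, h₁)), ((q₀', h₀'), (q₁', h₁'))) =>
      ((q₀, q₀') ∈ CP.P0.stateTr ∧ h₀' = h₀ ∧ q₁' = q₁ ∧ h₁' = h₁) ∨
      ((q₁, q₁') ∈ CP.P1.stateTr ∧ h₁' = h₁ ∧ q₀' = q₀ ∧ h₀' = h₀) ∨
      (∃ l, (q₀, (q₀', l)) ∈ CP.P0.acqTr ∧ l ∉ h₀ ∪ h₁ ∧ h₀' = h₀ ∪ {l} ∧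
        q₁' = q₁ ∧ h₁' = h₁) ∨
      (∃ l, (q₁, (q₁', l)) ∈ CP.P1.acqTr ∧ l ∉ h₀ ∪ h₁ ∧ h₁' = h₁ ∪ {l} ∧
        q₀' = q₀ ∧ h₀' = h₀) ∨
      (∃ l, ((q₀, l), q₀') ∈ CP.P0.relTr ∧ l ∈ h₀ ∧ h₀' = h₀ \ {l} ∧
        q₁' = q₁ ∧ h₁' = h₁) ∨
      (∃ l, ((q₁, l), q₁') ∈ CP.P1.relTr ∧ l ∈ h₁ ∧ h₁' = h₁ \ {l} ∧
        q₀' = q₀ ∧ h₀' = h₀) }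
  pushTr := { x | match x with
    | (((q₀, h₀), (q₁, h₁)), (((q₀', h₀'), (q₁', h₁')), a)) =>
      (∃ b, a = Sum.inl b ∧ (q₀, (q₀', b)) ∈ CP.P0.pushTr ∧ h₀' = h₀ ∧
        q₁' = q₁ ∧ h₁' = h₁) ∨
      (∃ b, a = Sum.inr b ∧ (q₁, (q₁', b)) ∈ CP.P1.pushTr ∧ h₁' = h₁ ∧
        q₀' = q₀ ∧ h₀' = h₀) }
  popTr := { x | match x with
    | ((((q₀, h₀), (q₁, h₁)), a), ((q₀', h₀'), (q₁', h₁'))) =>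
      (∃ b, a = Sum.inl b ∧ ((q₀, b), q₀') ∈ CP.P0.popTr ∧ h₀' = h₀ ∧
        q₁' = q₁ ∧ h₁' = h₁) ∨
      (∃ b, a = Sum.inr b ∧ ((q₁, b), q₁') ∈ CP.P1.popTr ∧ h₁' = h₁ ∧
        q₀' = q₀ ∧ h₀' = h₀) }
  acqTr := ∅
  relTr := ∅

end TwoPDS

namespace CombAux

/-- Tag of a stack symbol of the combined PDS: which thread it belongs to. -/
def tg {Γ₀ Γ₁ : Type} : Γ₀ ⊕ Γ₁ → Fin 2 := Sum.elim (fun _ => 0) (fun _ => 1)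

/-- Abstract single-stack step, labelled by a `Label × Fin 2`. -/
def SStep {A L : Type} (t : A → Fin 2) (w : List A) (lb : Label L × Fin 2)
    (w' : List A) : Prop :=
  (lb.1 = Label.push ∧ ∃ a, t a = lb.2 ∧ w' = w ++ [a]) ∨
  (lb.1 = Label.pop ∧ ∃ a, t a = lb.2 ∧ w = w' ++ [a]) ∨
  (lb.1 ≠ Label.push ∧ lb.1 ≠ Label.pop ∧ w' = w)

/-- Number of symbols of tag `i` in `w`. -/
def cnt {A : Type} (t : A → Fin 2) (i : Fin 2) (w : List A) : ℕ :=
  w.countP (fun a => decide (t a = i))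

variable {A L : Type}

lemma cnt_append (t : A → Fin 2) (i : Fin 2) (w w' : List A) :
    cnt t i (w ++ w') = cnt t i w + cnt t i w' := List.countP_append ..

lemma cnt_snoc_eq (t : A → Fin 2) {i : Fin 2} {a : A} (h : t a = i) (w : List A) :
    cnt t i (w ++ [a]) = cnt t i w + 1 := by
  rw [cnt_append]; simp [cnt, h]

lemma cnt_take_le (t : A → Fin 2) (i : Fin 2) (w : List A) (n : ℕ) :
    cnt t i (w.take n) ≤ cnt t i w := by
  conv_rhs => rw [← List.take_append_drop n w]
  rw [cnt_append]; omega

lemma sstep_take {t : A → Fin 2} {w w' : List A} {lb : Label L × Fin 2}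
    (h : SStep t w lb w') {n : ℕ} (h1 : n ≤ w.length) (h2 : n ≤ w'.length) :
    w'.take n = w.take n := by
  rcases h with ⟨_, a, _, rfl⟩ | ⟨_, a, _, heq⟩ | ⟨_, _, rfl⟩
  · exact List.take_append_of_le_length h1
  · rw [heq]; exact (List.take_append_of_le_length h2).symm
  · rfl

lemma take_const {t : A → Fin 2} {W : ℕ → List A} {lab : ℕ → Label L × Fin 2} {len : ℕ}
    (hS : ∀ k < len, SStep t (W k) (lab k) (W (k+1))) (n a : ℕ) :
    ∀ b, a ≤ b → b ≤ len → (∀ p, a ≤ p → p ≤ b → n ≤ (W p).length) →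
      (W b).take n = (W a).take n := by
  intro b
  induction b with
  | zero => intro h _ _; obtain rfl : a = 0 := Nat.le_zero.mp h; rfl
  | succ m ih =>
    intro hab hblen hall
    rcases Nat.lt_or_ge a (m+1) with h | h
    · have hm : a ≤ m := Nat.lt_succ_iff.mp h
      rw [← ih hm (by omega) (fun p hp hp' => hall p hp (by omega))]
      exact sstep_take (hS m (by omega)) (hall m hm (by omega)) (hall (m+1) (by omega) le_rfl)
    · have : a = m + 1 := le_antisymm hab h
      rw [this]

end CombAux

namespace CombAux

variable {A L : Type}

lemma core {t : A → Fin 2} {W : ℕ → List A} {lab : ℕ → Label L × Fin 2} {len : ℕ}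
    (hS : ∀ k < len, SStep t (W k) (lab k) (W (k+1)))
    {i : Fin 2} {l₁ l₂ l₃ : ℕ} (h12 : l₁ < l₂) (h23 : l₂ < l₃) (h3 : l₃ < len)
    (hl1 : lab l₁ = (Label.push, i)) (hl2 : lab l₂ = (Label.push, 1 - i))
    (heq : cnt t i (W l₁) = cnt t i (W (l₃+1)))
    (hlb : ∀ p, l₁ + 1 ≤ p → p ≤ l₃ → cnt t i (W (l₁+1)) ≤ cnt t i (W p)) :
    ∃ j, l₂ < j ∧ j ≤ l₃ ∧ lab j = (Label.pop, 1 - i) ∧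
      cnt t (1-i) (W l₂) = cnt t (1-i) (W (j+1)) ∧
      ∀ p, l₂ + 1 ≤ p → p ≤ j → cnt t (1-i) (W (l₂+1)) ≤ cnt t (1-i) (W p) := by
  have hii : (1 : Fin 2) - i ≠ i := by fin_cases i <;> decide
  -- the push at l₁
  obtain ⟨a₁, ht1, hw1⟩ : ∃ a, t a = i ∧ W (l₁+1) = W l₁ ++ [a] := by
    rcases hS l₁ (by omega) with ⟨_, a, ht, hw⟩ | ⟨h, _⟩ | ⟨h, _, _⟩
    · exact ⟨a, by rw [hl1] at ht; exact ht, hw⟩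
    · rw [hl1] at h; simp at h
    · rw [hl1] at h; simp at h
  -- the push at l₂
  obtain ⟨a₂, ht2, hw2⟩ : ∃ a, t a = 1 - i ∧ W (l₂+1) = W l₂ ++ [a] := by
    rcases hS l₂ (by omega) with ⟨_, a, ht, hw⟩ | ⟨h, _⟩ | ⟨h, _, _⟩
    · exact ⟨a, by rw [hl2] at ht; exact ht, hw⟩
    · rw [hl2] at h; simp at h
    · rw [hl2] at h; simp at h
  set H := (W l₂).length with hH
  have hfull : (W (l₂+1)).take (H+1) = W l₂ ++ [a₂] := by
    rw [hw2]; exact List.take_of_length_le (by simp; omega)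
  have f1 : cnt t i (W (l₁+1)) = cnt t i (W l₁) + 1 := by rw [hw1]; exact cnt_snoc_eq t ht1 (W l₁)
  have flow2 : cnt t i (W l₁) + 1 ≤ cnt t i (W l₂) := by
    rw [← f1]; exact hlb l₂ (by omega) (by omega)
  -- Step 1: the stack height must drop to H somewhere in (l₂, l₃]
  have hdrop : ∃ p, p ≤ l₃ ∧ l₂ < p ∧ (W (p+1)).length ≤ H := by
    by_contra hno
    push_neg at hno
    have hall : ∀ p, l₂+1 ≤ p → p ≤ l₃+1 → H+1 ≤ (W p).length := by
      intro p hp hp'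
      rcases Nat.eq_or_lt_of_le hp with h | h
      · rw [← h, hw2]; simp; omega
      · obtain ⟨q, rfl⟩ : ∃ q, p = q + 1 := ⟨p - 1, by omega⟩
        exact hno q (by omega) (by omega)
    have hpre := take_const hS (H+1) (l₂+1) (l₃+1) (by omega) (by omega) hall
    have : cnt t i (W l₂) ≤ cnt t i (W (l₃+1)) := by
      calc cnt t i (W l₂) ≤ cnt t i (W l₂ ++ [a₂]) := by rw [cnt_append]; omega
        _ = cnt t i ((W (l₃+1)).take (H+1)) := by rw [hpre, hfull]
        _ ≤ cnt t i (W (l₃+1)) := cnt_take_le ..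
    omega
  -- j := the first drop
  classical
  let j := Nat.find hdrop
  obtain ⟨hj3, hj2, hjH⟩ : j ≤ l₃ ∧ l₂ < j ∧ (W (j+1)).length ≤ H := Nat.find_spec hdrop
  have hmin : ∀ p, l₂+1 ≤ p → p ≤ j → H+1 ≤ (W p).length := by
    intro p hp hpj
    rcases Nat.eq_or_lt_of_le hp with h | h
    · rw [← h, hw2]; simp; omega
    · obtain ⟨q, rfl⟩ : ∃ q, p = q + 1 := ⟨p - 1, by omega⟩
      have hq : q < j := by omega
      have := Nat.find_min hdrop hq
      simp only [not_and, not_le] at this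
      exact this (by omega) (by omega)
  have hpre : ∀ p, l₂+1 ≤ p → p ≤ j → (W p).take (H+1) = W l₂ ++ [a₂] := by
    intro p hp hpj
    rw [take_const hS (H+1) (l₂+1) p hp (by omega) (fun q hq hq' => hmin q hq (by omega)),
      hfull]
  -- the step at j must be a pop of a₂
  obtain ⟨hpop, a, hta, hw⟩ : (lab j).1 = Label.pop ∧ ∃ a, t a = (lab j).2 ∧
      W j = W (j+1) ++ [a] := by
    have hlen1 : H + 1 ≤ (W j).length := hmin j (by omega) le_rfl
    rcases hS j (by omega) with ⟨_, a, ht, hw⟩ | ⟨h, ha⟩ | ⟨_, _, hw⟩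
    · have := congrArg List.length hw; simp at this; omega
    · exact ⟨h, ha⟩
    · have := congrArg List.length hw; omega
  have hlenj : (W j).length = H + 1 := by
    have h1 := hmin j (by omega) le_rfl
    have := congrArg List.length hw; simp at this; omega
  have hWj : W j = W l₂ ++ [a₂] := by
    have := hpre j (by omega) le_rfl
    rwa [List.take_of_length_le (by omega)] at this
  obtain ⟨hWj1, rfl⟩ : W (j+1) = W l₂ ∧ a = a₂ := by
    have h := hw.symm.trans hWj
    have := List.append_inj' h rfl
    exact ⟨this.1, by simpa using this.2⟩
  refine ⟨j, hj2, hj3, ?_, by rw [hWj1], ?_⟩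
  · have h2 : (lab j).2 = 1 - i := by rw [← hta, ht2]
    calc lab j = ((lab j).1, (lab j).2) := rfl
      _ = (Label.pop, 1 - i) := by rw [hpop, h2]
  · intro p hp hpj
    calc cnt t (1-i) (W (l₂+1)) = cnt t (1-i) ((W p).take (H+1)) := by
          rw [hpre p hp hpj, hw2]
      _ ≤ cnt t (1-i) (W p) := cnt_take_le ..

end CombAux

namespace CombAux

open TwoPDS

variable {Q₀ Γ₀ Q₁ Γ₁ L : Type}

lemma cnt_left (w : List (Γ₀ ⊕ Γ₁)) :
    (w.filterMap Sum.getLeft?).length = cnt tg 0 w := by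
  induction w with
  | nil => rfl
  | cons a tl ih =>
    cases a <;> simp [cnt, List.countP_cons, tg, List.filterMap_cons, Sum.getLeft?] at ih ⊢ <;> omega

lemma cnt_right (w : List (Γ₀ ⊕ Γ₁)) :
    (w.filterMap Sum.getRight?).length = cnt tg 1 w := by
  induction w with
  | nil => rfl
  | cons a tl ih =>
    cases a <;> simp [cnt, List.countP_cons, tg, List.filterMap_cons, Sum.getRight?] at ih ⊢ <;> omega

lemma wellBracketed_of_lift {CP : TwoPDS Q₀ Γ₀ Q₁ Γ₁ L} (c : Comp CP)
    (W : ℕ → List (Γ₀ ⊕ Γ₁))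
    (hS : ∀ k < c.len, SStep tg (W k) (c.lab k) (W (k+1)))
    (hF : ∀ k ≤ c.len, (c.s k).1.2.1 = (W k).filterMap Sum.getLeft? ∧
      (c.s k).2.2.1 = (W k).filterMap Sum.getRight?) :
    c.WellBracketed := by
  have hh : ∀ (i : Fin 2) (k : ℕ), k ≤ c.len → c.height i k = cnt tg i (W k) := by
    intro i k hk
    match i with
    | 0 => rw [show c.height 0 k = (c.s k).1.2.1.length from rfl, (hF k hk).1, cnt_left]
    | 1 => rw [show c.height 1 k = (c.s k).2.2.1.length from rfl, (hF k hk).2, cnt_right]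
  intro l₁ l₂ l₃ hW
  obtain ⟨i, h12, h23, h3, hM, hl2, hmin⟩ := hW
  obtain ⟨_, h3len, hlab1, hlab3, hht, hlow⟩ := hM
  obtain ⟨j, hj2, hj3, hjlab, hjeq, hjlow⟩ := core hS h12 h23 h3 hlab1 hl2
    (by rw [← hh i l₁ (by omega), ← hh i (l₃+1) (by omega)]; exact hht)
    (fun p hp hp' => by
      rw [← hh i (l₁+1) (by omega), ← hh i p (by omega)]; exact hlow p hp hp')
  have hmatch : c.Matching (1-i) l₂ j :=
    ⟨hj2, by omega, hl2, hjlab,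
      by rw [hh _ l₂ (by omega), hh _ (j+1) (by omega)]; exact hjeq,
      fun p hp hp' => by
        rw [hh _ (l₂+1) (by omega), hh _ p (by omega)]; exact hjlow p hp hp'⟩
  have := hmin j hmatch
  omega

end CombAux

namespace CombAux

open TwoPDS

variable {Q₀ Γ₀ Q₁ Γ₁ L : Type}

/-- Project a combined configuration to a configuration of the 2-PDS. -/
def proj (x : CombState Q₀ Q₁ L × List (Γ₀ ⊕ Γ₁)) : Conf Q₀ Γ₀ Q₁ Γ₁ L :=
  ((x.1.1.1, x.2.filterMap Sum.getLeft?, x.1.1.2),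
   (x.1.2.1, x.2.filterMap Sum.getRight?, x.1.2.2))

lemma extend {CP : TwoPDS Q₀ Γ₀ Q₁ Γ₁ L} (c : Comp CP) (lb : Label L × Fin 2)
    (tconf : Conf Q₀ Γ₀ Q₁ Γ₁ L) (h : CP.Step (c.s c.len) lb tconf) :
    ∃ c' : Comp CP, c'.len = c.len + 1 ∧ (∀ k, k ≤ c.len → c'.s k = c.s k) ∧
      (∀ k, k < c.len → c'.lab k = c.lab k) ∧ c'.lab c.len = lb ∧
      c'.s (c.len+1) = tconf := by
  refine ⟨⟨c.len + 1, fun k => if k ≤ c.len then c.s k else tconf,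
    fun k => if k = c.len then lb else c.lab k, by simpa using c.init, ?_⟩,
    rfl, fun k hk => if_pos hk, fun k hk => if_neg (by omega), if_pos rfl,
    if_neg (by omega)⟩
  intro k hk
  rcases Nat.lt_or_ge k c.len with hkl | hkl
  · rw [if_pos (by omega : k ≤ c.len), if_pos (by omega : k + 1 ≤ c.len),
      if_neg (by omega : ¬ k = c.len)]
    exact c.step k hkl
  · have hkc : k = c.len := by omega
    subst hkc
    rw [if_pos (le_refl c.len), if_neg (show ¬ c.len + 1 ≤ c.len by omega), if_pos rfl]
    exact h

lemma step_sim {CP : TwoPDS Q₀ Γ₀ Q₁ Γ₁ L} {x y : CombState Q₀ Q₁ L × List (Γ₀ ⊕ Γ₁)}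
    (h : CP.comb.CStep x y) :
    ∃ lb : Label L × Fin 2, CP.Step (proj x) lb (proj y) ∧ SStep tg x.2 lb y.2 := by
  obtain ⟨⟨⟨p₀, g₀⟩, p₁, g₁⟩, v⟩ := x
  obtain ⟨⟨⟨q₀, h₀⟩, q₁, h₁⟩, w⟩ := y
  rcases h with ⟨hm, hw⟩ | ⟨a, hm, hw⟩ | ⟨a, hm, hw⟩
  · -- internal move of the combined system
    simp only [comb, Set.mem_setOf_eq] at hm
    dsimp only at hw
    subst hw
    rcases hm with ⟨hm, rfl, rfl, rfl⟩ | ⟨hm, rfl, rfl, rfl⟩ |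
      ⟨l, hm, hfree, rfl, rfl, rfl⟩ | ⟨l, hm, hfree, rfl, rfl, rfl⟩ |
      ⟨l, hm, hl, rfl, rfl, rfl⟩ | ⟨l, hm, hl, rfl, rfl, rfl⟩
    · exact ⟨(Label.state, 0), Or.inl ⟨rfl, ⟨hm, rfl, rfl⟩, rfl⟩,
        Or.inr (Or.inr ⟨by simp, by simp, rfl⟩)⟩
    · exact ⟨(Label.state, 1), Or.inr ⟨rfl, ⟨hm, rfl, rfl⟩, rfl⟩,
        Or.inr (Or.inr ⟨by simp, by simp, rfl⟩)⟩
    · refine ⟨(Label.acq l, 0), Or.inl ⟨rfl, ⟨hm, ?_, rfl, rfl⟩, rfl⟩,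
        Or.inr (Or.inr ⟨by simp, by simp, rfl⟩)⟩
      simp only [Set.mem_union] at hfree
      exact ⟨fun h => hfree (Or.inl h), fun h => hfree (Or.inr h)⟩
    · refine ⟨(Label.acq l, 1), Or.inr ⟨rfl, ⟨hm, ?_, rfl, rfl⟩, rfl⟩,
        Or.inr (Or.inr ⟨by simp, by simp, rfl⟩)⟩
      simp only [Set.mem_union] at hfree
      exact ⟨fun h => hfree (Or.inl h), fun h => hfree (Or.inr h)⟩
    · exact ⟨(Label.rel l, 0), Or.inl ⟨rfl, ⟨hm, hl, rfl, rfl⟩, rfl⟩,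
        Or.inr (Or.inr ⟨by simp, by simp, rfl⟩)⟩
    · exact ⟨(Label.rel l, 1), Or.inr ⟨rfl, ⟨hm, hl, rfl, rfl⟩, rfl⟩,
        Or.inr (Or.inr ⟨by simp, by simp, rfl⟩)⟩
  · -- push
    simp only [comb, Set.mem_setOf_eq] at hm
    dsimp only at hw
    subst hw
    rcases hm with ⟨b, rfl, hm, rfl, rfl, rfl⟩ | ⟨b, rfl, hm, rfl, rfl, rfl⟩
    · exact ⟨(Label.push, 0),
        Or.inl ⟨rfl, ⟨b, hm, by simp [proj], rfl⟩, by simp [proj]⟩,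
        Or.inl ⟨rfl, Sum.inl b, rfl, rfl⟩⟩
    · exact ⟨(Label.push, 1),
        Or.inr ⟨rfl, ⟨b, hm, by simp [proj], rfl⟩, by simp [proj]⟩,
        Or.inl ⟨rfl, Sum.inr b, rfl, rfl⟩⟩
  · -- pop
    simp only [comb, Set.mem_setOf_eq] at hm
    dsimp only at hw
    subst hw
    rcases hm with ⟨b, rfl, hm, rfl, rfl, rfl⟩ | ⟨b, rfl, hm, rfl, rfl, rfl⟩
    · exact ⟨(Label.pop, 0),
        Or.inl ⟨rfl, ⟨b, hm, by simp [proj], rfl⟩, by simp [proj]⟩,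
        Or.inr (Or.inl ⟨rfl, Sum.inl b, rfl, rfl⟩)⟩
    · exact ⟨(Label.pop, 1),
        Or.inr ⟨rfl, ⟨b, hm, by simp [proj], rfl⟩, by simp [proj]⟩,
        Or.inr (Or.inl ⟨rfl, Sum.inr b, rfl, rfl⟩)⟩

lemma build {CP : TwoPDS Q₀ Γ₀ Q₁ Γ₁ L} (x : CombState Q₀ Q₁ L × List (Γ₀ ⊕ Γ₁))
    (hr : Relation.ReflTransGen CP.comb.CStep (CP.comb.start, []) x) :
    ∃ (c : Comp CP) (W : ℕ → List (Γ₀ ⊕ Γ₁)),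
      (∀ k < c.len, SStep tg (W k) (c.lab k) (W (k+1))) ∧
      (∀ k ≤ c.len, (c.s k).1.2.1 = (W k).filterMap Sum.getLeft? ∧
        (c.s k).2.2.1 = (W k).filterMap Sum.getRight?) ∧
      W c.len = x.2 ∧ c.s c.len = proj x := by
  induction hr with
  | refl =>
    exact ⟨⟨0, fun _ => CP.initConf, fun _ => (Label.state, 0), rfl,
      fun k hk => absurd hk (Nat.not_lt_zero k)⟩, fun _ => [],
      fun k hk => absurd hk (Nat.not_lt_zero k),
      fun k _ => ⟨rfl, rfl⟩, rfl, rfl⟩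
  | @tail b z hab hbz ih =>
    obtain ⟨c, W, hS, hF, hW, hend⟩ := ih
    obtain ⟨lb, hstep, hsstep⟩ := step_sim hbz
    rw [← hend] at hstep
    obtain ⟨c', hlen, hs, hlab, hlabend, hsend⟩ := extend c lb (proj z) hstep
    refine ⟨c', fun k => if k ≤ c.len then W k else z.2, ?_, ?_, ?_, ?_⟩
    · intro k hk
      rw [hlen] at hk
      dsimp only
      rcases Nat.lt_or_ge k c.len with hkl | hkl
      · rw [if_pos (show k ≤ c.len by omega), if_pos (show k + 1 ≤ c.len by omega),
          hlab k hkl]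
        exact hS k hkl
      · have hkc : k = c.len := by omega
        subst hkc
        rw [if_pos (le_refl c.len), if_neg (show ¬ c.len + 1 ≤ c.len by omega),
          hlabend, hW]
        exact hsstep
    · intro k hk
      rw [hlen] at hk
      dsimp only
      rcases Nat.lt_or_ge k (c.len + 1) with hkl | hkl
      · rw [if_pos (show k ≤ c.len by omega), hs k (by omega)]
        exact hF k (by omega)
      · have hkc : k = c.len + 1 := by omega
        subst hkc
        rw [if_neg (show ¬ c.len + 1 ≤ c.len by omega), hsend]
        exact ⟨rfl, rfl⟩
    · rw [hlen]
      dsimp only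
      rw [if_neg (show ¬ c.len + 1 ≤ c.len by omega)]
    · rw [hlen, hsend]

end CombAux

/-- Every reachable configuration `(((q₀,h₀),(q₁,h₁)), w)` of the
combined pushdown system of a 2-PDS `CP` projects to a configuration of `CP`
(restricting `w` to each thread's stack alphabet) that is reachable by a
well-bracketed computation of `CP`. -/
theorem comb_reachable_implies_wellBracketed_reachable
    {Q₀ Γ₀ Q₁ Γ₁ L : Type} [Finite Q₀] [Finite Γ₀] [Finite Q₁] [Finite Γ₁] [Finite L]
    (CP : TwoPDS Q₀ Γ₀ Q₁ Γ₁ L)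
    (q₀ : Q₀) (h₀ : Set L) (q₁ : Q₁) (h₁ : Set L) (w : List (Γ₀ ⊕ Γ₁))
    (hr : CP.comb.Reachable (((q₀, h₀), (q₁, h₁)), w)) :
    ∃ c : TwoPDS.Comp CP, c.WellBracketed ∧
      c.s c.len = ((q₀, w.filterMap Sum.getLeft?, h₀), (q₁, w.filterMap Sum.getRight?, h₁)) := by
  obtain ⟨c, W, hS, hF, hW, hend⟩ := CombAux.build (CP := CP) (((q₀, h₀), (q₁, h₁)), w) hr
  exact ⟨c, CombAux.wellBracketed_of_lift c W hS hF, hend⟩
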